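/- A λ-small colimit of λ-presentable objects in a cocomplete category is λ-presentable. -/

import Mathlib

/-!
STATEMENT 2: A λ-small colimit of λ-presentable objects in a cocomplete category
is λ-presentable. (A λ-small colimit is a colimit over a category with fewer than
λ morphisms.)
-/
/-!
STATEMENT 0: If `F : C ⥤ D` is a fully faithful functor and `D` is locally
λ-presentable, then the isomorphism classes of λ-presentable objects of `D`
form a set: there is a (v-small) family of objects containing a representative
of each isomorphism class of λ-presentable objects.
-/

universe v u u'

open CategoryTheory Limits Opposite

/-- A small category `J` is `κ`-filtered if every diagram of size `< κ` admits a cocone. -/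
def IsCardinalFiltered (J : Type v) [SmallCategory J] (κ : Cardinal.{v}) : Prop :=
  ∀ (K : Type v) (_ : SmallCategory K),
    Cardinal.mk (Σ (a : K) (b : K), a ⟶ b) < κ →
      ∀ F : K ⥤ J, Nonempty (Limits.Cocone F)

/-- An object `X` is `κ`-presentable if `Hom(X, -)` preserves `κ`-filtered colimits. -/
def IsPresentable {D : Type u} [Category.{v} D] (κ : Cardinal.{v}) (X : D) : Prop :=
  ∀ (J : Type v) (_ : SmallCategory J), IsCardinalFiltered J κ →
    Nonempty (PreservesColimitsOfShape J (coyoneda.obj (op X)))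

section Tools

variable {J : Type v} [SmallCategory J] {κ : Cardinal.{v}}

/-- Upper bounds for families of fewer than `κ` objects. -/
lemma IsCardinalFiltered.upperBound (hJ : IsCardinalFiltered J κ)
    (ι : Type v) (hι : Cardinal.mk ι < κ) (obj : ι → J) :
    ∃ t : J, Nonempty (∀ i, obj i ⟶ t) := by
  have hcard : Cardinal.mk (Σ (a : Discrete ι) (b : Discrete ι), a ⟶ b) < κ := by
    refine lt_of_le_of_lt (Cardinal.mk_le_of_injective
      (f := fun x : (Σ (a : Discrete ι) (b : Discrete ι), a ⟶ b) => x.1.as) ?_) hι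
    rintro ⟨⟨a⟩, ⟨b⟩, ⟨⟨h⟩⟩⟩ ⟨⟨a'⟩, ⟨b'⟩, ⟨⟨h'⟩⟩⟩ (e : a = a')
    cases h; cases h'; cases e; rfl
  obtain ⟨c⟩ := hJ _ _ hcard (Discrete.functor obj)
  exact ⟨c.pt, ⟨fun i => c.ι.app ⟨i⟩⟩⟩

/-- Wide coequalizing morphisms for families of fewer than `κ` parallel morphisms. -/
lemma IsCardinalFiltered.coeq (hJ : IsCardinalFiltered J κ) (hκ : Cardinal.aleph0 ≤ κ)
    (ι : Type v) (hι : Cardinal.mk ι < κ) {x y : J} (ar : ι → (x ⟶ y)) :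
    ∃ (z : J) (e : y ⟶ z) (d : x ⟶ z), ∀ i, ar i ≫ e = d := by
  have hcard : Cardinal.mk (Σ (a : WalkingParallelFamily ι) (b : WalkingParallelFamily ι),
      a ⟶ b) < κ := by
    have hinj : Function.Injective (fun x : (Σ (a : WalkingParallelFamily ι)
        (b : WalkingParallelFamily ι), a ⟶ b) =>
        (match x with
          | ⟨_, _, .id .zero⟩ => Sum.inl (ULift.up false)
          | ⟨_, _, .id .one⟩ => Sum.inl (ULift.up true)
          | ⟨_, _, .line i⟩ => Sum.inr i : ULift.{v} Bool ⊕ ι)) := by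
      rintro ⟨a, b, (f : WalkingParallelFamily.Hom ι a b)⟩ ⟨a', b', (f' : WalkingParallelFamily.Hom ι a' b')⟩ h
      cases a <;> cases b <;> cases a' <;> cases b' <;> cases f <;> cases f' <;> simp_all
    refine lt_of_le_of_lt (Cardinal.mk_le_of_injective hinj) ?_
    have : Cardinal.mk (ULift.{v} Bool ⊕ ι) = Cardinal.mk (ULift.{v} Bool) + Cardinal.mk ι := by
      simp [Cardinal.mk_sum]
    rw [this]
    exact Cardinal.add_lt_of_lt hκ (lt_of_lt_of_le (Cardinal.lt_aleph0_of_finite _) hκ) hι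
  obtain ⟨c⟩ := hJ _ _ hcard (parallelFamily ar)
  exact ⟨c.pt, c.ι.app .one, c.ι.app .zero, fun i => c.w (WalkingParallelFamily.Hom.line i)⟩

/-- A `κ`-filtered category (for `κ` regular, hence infinite) is filtered. -/
lemma IsCardinalFiltered.isFiltered (hJ : IsCardinalFiltered J κ)
    (hκ : Cardinal.aleph0 ≤ κ) : IsFiltered J := by
  have h2 : Cardinal.mk (ULift.{v} Bool) < κ :=
    lt_of_lt_of_le (Cardinal.lt_aleph0_of_finite _) hκ
  refine { nonempty := ?_, cocone_objs := ?_, cocone_maps := ?_ }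
  · intro X Y
    obtain ⟨t, ⟨ρ⟩⟩ := hJ.upperBound (ULift Bool) h2 (fun b => cond b.down X Y)
    exact ⟨t, ρ ⟨true⟩, ρ ⟨false⟩, trivial⟩
  · intro X Y f g
    obtain ⟨z, e, d, hd⟩ := hJ.coeq hκ (ULift Bool) h2 (fun b => cond b.down f g)
    exact ⟨z, e, (hd ⟨true⟩).trans (hd ⟨false⟩).symm⟩
  · obtain ⟨t, -⟩ := hJ.upperBound PEmpty
      (lt_of_lt_of_le (Cardinal.lt_aleph0_of_finite _) hκ) PEmpty.elim
    exact ⟨t⟩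

end Tools

theorem statement2 {D : Type u} [Category.{v} D] [HasColimits D]
    (κ : Cardinal.{v}) (hκ : κ.IsRegular)
    (K : Type v) [SmallCategory K]
    (hK : Cardinal.mk (Σ (a : K) (b : K), a ⟶ b) < κ)
    (F : K ⥤ D) (hF : ∀ k : K, IsPresentable κ (F.obj k)) :
    IsPresentable κ (colimit F) := by
  intro J _ hJ
  haveI hfil : IsFiltered J := hJ.isFiltered hκ.aleph0_le
  have hK' : Cardinal.mk K < κ := lt_of_le_of_lt (Cardinal.mk_le_of_injective
      (f := fun k : K => (⟨k, k, 𝟙 k⟩ : Σ (a : K) (b : K), a ⟶ b))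
      (fun a b h => congrArg Sigma.fst h)) hK
  constructor
  constructor
  intro G
  have hpres : ∀ k : K,
      IsColimit ((coyoneda.obj (op (F.obj k))).mapCocone (colimit.cocone G)) := by
    intro k
    haveI := (hF k J inferInstance hJ).some
    exact isColimitOfPreserves _ (colimit.isColimit G)
  refine preservesColimit_of_preserves_colimit_cocone (colimit.isColimit G)
    (Types.FilteredColimit.isColimitOf _ _ ?_ ?_)
  · -- surjectivity
    intro f
    have step1 : ∀ k : K, ∃ (jj : J) (vv : F.obj k ⟶ G.obj jj),
        vv ≫ colimit.ι G jj = colimit.ι F k ≫ f := by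
      intro k
      obtain ⟨jj, vv, h⟩ := Types.jointly_surjective _ (hpres k) (colimit.ι F k ≫ f)
      exact ⟨jj, vv, h⟩
    choose jj vv hv using step1
    obtain ⟨t, ⟨ρ⟩⟩ := hJ.upperBound K hK' jj
    set w : ∀ k, F.obj k ⟶ G.obj t := fun k => vv k ≫ G.map (ρ k) with hw
    have hwι : ∀ k, w k ≫ colimit.ι G t = colimit.ι F k ≫ f := by
      intro k
      rw [hw]
      simp only [Category.assoc, colimit.w]
      exact hv k
    have step3 : ∀ m : (Σ (a : K) (b : K), a ⟶ b), ∃ (l : J) (f1 f2 : t ⟶ l),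
        (F.map m.2.2 ≫ w m.2.1) ≫ G.map f1 = w m.1 ≫ G.map f2 := by
      intro m
      apply (Types.FilteredColimit.isColimit_eq_iff _ (hpres m.1)).mp
      show (F.map m.2.2 ≫ w m.2.1) ≫ colimit.ι G t = w m.1 ≫ colimit.ι G t
      rw [Category.assoc, hwι, hwι, ← Category.assoc, colimit.w]
    choose l f1 f2 hl using step3
    obtain ⟨t', ⟨σ⟩⟩ := hJ.upperBound _ hK l
    have hMM : Cardinal.mk ((Σ (a : K) (b : K), a ⟶ b) ⊕ (Σ (a : K) (b : K), a ⟶ b)) < κ := by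
      have : Cardinal.mk ((Σ (a : K) (b : K), a ⟶ b) ⊕ (Σ (a : K) (b : K), a ⟶ b)) =
          Cardinal.mk (Σ (a : K) (b : K), a ⟶ b) + Cardinal.mk (Σ (a : K) (b : K), a ⟶ b) := by
        simp [Cardinal.mk_sum]
      rw [this]
      exact Cardinal.add_lt_of_lt hκ.aleph0_le hK hK
    obtain ⟨z, e, d, hd⟩ := hJ.coeq hκ.aleph0_le _ hMM
      (Sum.elim (fun m => f1 m ≫ σ m) (fun m => f2 m ≫ σ m))
    have hnat : ∀ (a b : K) (mm : a ⟶ b),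
        F.map mm ≫ (w b ≫ G.map d) = w a ≫ G.map d := by
      intro a b mm
      have h1 := hd (Sum.inl ⟨a, b, mm⟩)
      have h2 := hd (Sum.inr ⟨a, b, mm⟩)
      simp only [Sum.elim_inl, Sum.elim_inr] at h1 h2
      calc F.map mm ≫ w b ≫ G.map d
          = F.map mm ≫ w b ≫ G.map ((f1 ⟨a, b, mm⟩ ≫ σ ⟨a, b, mm⟩) ≫ e) := by rw [h1]
        _ = ((F.map mm ≫ w b) ≫ G.map (f1 ⟨a, b, mm⟩)) ≫ G.map (σ ⟨a, b, mm⟩ ≫ e) := by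
            simp [G.map_comp]
        _ = (w a ≫ G.map (f2 ⟨a, b, mm⟩)) ≫ G.map (σ ⟨a, b, mm⟩ ≫ e) := by
            rw [hl ⟨a, b, mm⟩]
        _ = w a ≫ G.map ((f2 ⟨a, b, mm⟩ ≫ σ ⟨a, b, mm⟩) ≫ e) := by simp [G.map_comp]
        _ = w a ≫ G.map d := by rw [h2]
    set cc : Cocone F :=
      { pt := G.obj z
        ι := { app := fun k => w k ≫ G.map d
               naturality := fun a b mm => by simpa using hnat a b mm } } with hcc
    refine ⟨z, colimit.desc F cc, ?_⟩
    have heq : f = colimit.desc F cc ≫ colimit.ι G z := by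
      apply colimit.hom_ext
      intro k
      rw [colimit.ι_desc_assoc]
      show colimit.ι F k ≫ f = (w k ≫ G.map d) ≫ colimit.ι G z
      rw [Category.assoc, colimit.w, hwι]
    exact heq
  · -- injectivity
    intro i j xi xj hij
    have hij' : xi ≫ colimit.ι G i = xj ≫ colimit.ι G j := hij
    set p : colimit F ⟶ G.obj (IsFiltered.max i j) := xi ≫ G.map (IsFiltered.leftToMax i j)
      with hp
    set q : colimit F ⟶ G.obj (IsFiltered.max i j) := xj ≫ G.map (IsFiltered.rightToMax i j)
      with hq
    have hpq : p ≫ colimit.ι G (IsFiltered.max i j) = q ≫ colimit.ι G (IsFiltered.max i j) := by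
      rw [hp, hq, Category.assoc, Category.assoc, colimit.w, colimit.w, hij']
    have step : ∀ k : K, ∃ (l : J) (a b : IsFiltered.max i j ⟶ l),
        (colimit.ι F k ≫ p) ≫ G.map a = (colimit.ι F k ≫ q) ≫ G.map b := by
      intro k
      apply (Types.FilteredColimit.isColimit_eq_iff _ (hpres k)).mp
      show (colimit.ι F k ≫ p) ≫ colimit.ι G (IsFiltered.max i j) =
        (colimit.ι F k ≫ q) ≫ colimit.ι G (IsFiltered.max i j)
      have h0 : colimit.ι F k ≫ (p ≫ colimit.ι G (IsFiltered.max i j)) =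
          colimit.ι F k ≫ (q ≫ colimit.ι G (IsFiltered.max i j)) := by rw [hpq]
      simpa only [Category.assoc] using h0
    choose l a b hl using step
    obtain ⟨t', ⟨σ⟩⟩ := hJ.upperBound K hK' l
    have hKK : Cardinal.mk (K ⊕ K) < κ := by
      have : Cardinal.mk (K ⊕ K) = Cardinal.mk K + Cardinal.mk K := by simp [Cardinal.mk_sum]
      rw [this]
      exact Cardinal.add_lt_of_lt hκ.aleph0_le hK' hK'
    obtain ⟨z, e, d, hd⟩ := hJ.coeq hκ.aleph0_le _ hKK
      (Sum.elim (fun k => a k ≫ σ k) (fun k => b k ≫ σ k))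
    have key : p ≫ G.map d = q ≫ G.map d := by
      apply colimit.hom_ext
      intro k
      have h1 := hd (Sum.inl k)
      have h2 := hd (Sum.inr k)
      simp only [Sum.elim_inl, Sum.elim_inr] at h1 h2
      calc colimit.ι F k ≫ p ≫ G.map d
          = colimit.ι F k ≫ p ≫ G.map ((a k ≫ σ k) ≫ e) := by rw [h1]
        _ = ((colimit.ι F k ≫ p) ≫ G.map (a k)) ≫ G.map (σ k ≫ e) := by simp [G.map_comp]
        _ = ((colimit.ι F k ≫ q) ≫ G.map (b k)) ≫ G.map (σ k ≫ e) := by rw [hl k]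
        _ = colimit.ι F k ≫ q ≫ G.map ((b k ≫ σ k) ≫ e) := by simp [G.map_comp]
        _ = colimit.ι F k ≫ q ≫ G.map d := by rw [h2]
    refine ⟨z, IsFiltered.leftToMax i j ≫ d, IsFiltered.rightToMax i j ≫ d, ?_⟩
    show xi ≫ G.map (IsFiltered.leftToMax i j ≫ d) = xj ≫ G.map (IsFiltered.rightToMax i j ≫ d)
    rw [G.map_comp, G.map_comp, ← Category.assoc, ← Category.assoc, ← hp, ← hq, key]
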